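/- Let A ∈ M_n⁺ be positive definite, E an orthogonal projection in M_n, and f an operator monotone function on [0,∞) with f(0) = 0; set f̂(x) := f(x)/x for x > 0 and f̂(0) := 0. Then E f̂(E A^{−1} E) E = A^{1/2} f(A^{−1/2} E A^{−1/2}) A^{1/2}. -/

import Mathlib

open Matrix Finset
open scoped ComplexOrder

/-- Functional calculus on a Hermitian matrix (junk value `0` if not Hermitian). -/
noncomputable def cfcH {n : ℕ} (f : ℝ → ℝ) (A : Matrix (Fin n) (Fin n) ℂ) :
    Matrix (Fin n) (Fin n) ℂ :=
  if hA : A.IsHermitian then hA.cfc f else 0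

/-- Real power of a (Hermitian) matrix via functional calculus. -/
noncomputable def mpow {n : ℕ} (A : Matrix (Fin n) (Fin n) ℂ) (p : ℝ) :
    Matrix (Fin n) (Fin n) ℂ :=
  cfcH (fun x : ℝ => x ^ p) A

/-- Eigenvalues of a Hermitian matrix arranged in decreasing order (junk `0` otherwise). -/
noncomputable def eigsDesc {n : ℕ} (A : Matrix (Fin n) (Fin n) ℂ) : Fin n → ℝ :=
  if hA : A.IsHermitian then fun i => (hA.eigenvalues ∘ Tuple.sort hA.eigenvalues) i.rev
  else 0

/-- Operator norm of a matrix, acting on Euclidean space. -/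
noncomputable def opNorm {n : ℕ} (A : Matrix (Fin n) (Fin n) ℂ) : ℝ :=
  ‖Matrix.toEuclideanCLM (𝕜 := ℂ) (n := Fin n) A‖

/-- Weighted geometric mean `A #_α B` for invertible `A`. -/
noncomputable def gmean {n : ℕ} (α : ℝ) (A B : Matrix (Fin n) (Fin n) ℂ) :
    Matrix (Fin n) (Fin n) ℂ :=
  mpow A (1/2) * cfcH (fun x : ℝ => x ^ α) (mpow A (-(1/2)) * B * mpow A (-(1/2))) * mpow A (1/2)

/-- Every real function is continuous on the (finite) real spectrum of a matrix. -/
lemma contOnSpec {n : ℕ} (f : ℝ → ℝ) (A : Matrix (Fin n) (Fin n) ℂ) :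
    ContinuousOn f (spectrum ℝ A) := by
  rw [continuousOn_iff_continuous_restrict]
  fun_prop

lemma cfcH_eq_cfc {n : ℕ} (f : ℝ → ℝ) {A : Matrix (Fin n) (Fin n) ℂ} (hA : A.IsHermitian) :
    cfcH f A = cfc f A := by
  rw [cfcH, dif_pos hA, hA.cfc_eq]

lemma pow_mul_swap {n : ℕ} (X : Matrix (Fin n) (Fin n) ℂ) (k : ℕ) :
    (X * Xᴴ) ^ k * X = X * (Xᴴ * X) ^ k := by
  induction k with
  | zero => simp
  | succ k ih =>
      calc (X * Xᴴ) ^ (k + 1) * X = ((X * Xᴴ) ^ k * X) * (Xᴴ * X) := by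
            rw [pow_succ]; noncomm_ring
        _ = X * (Xᴴ * X) ^ (k + 1) := by rw [ih, pow_succ]; noncomm_ring

lemma aeval_mul_swap {n : ℕ} (X : Matrix (Fin n) (Fin n) ℂ) (p : Polynomial ℝ) :
    (Polynomial.aeval (X * Xᴴ) p) * X = X * Polynomial.aeval (Xᴴ * X) p := by
  induction p using Polynomial.induction_on' with
  | add p q hp hq => rw [map_add, map_add, add_mul, mul_add, hp, hq]
  | monomial k c =>
      rw [Polynomial.aeval_monomial, Polynomial.aeval_monomial, mul_assoc,
        pow_mul_swap, ← mul_assoc, Algebra.commutes c X, mul_assoc]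

/-- Key intertwining identity: `g(X Xᴴ) X = X g(Xᴴ X)` for any real function `g`. -/
lemma cfc_mul_swap {n : ℕ} (g : ℝ → ℝ) (X : Matrix (Fin n) (Fin n) ℂ) :
    cfc g (X * Xᴴ) * X = X * cfc g (Xᴴ * X) := by
  have h1 : (X * Xᴴ).IsHermitian := (posSemidef_self_mul_conjTranspose X).1
  have h2 : (Xᴴ * X).IsHermitian := (posSemidef_conjTranspose_mul_self X).1
  classical
  set s : Finset ℝ :=
    (Matrix.finite_real_spectrum (A := X * Xᴴ)).toFinset ∪
      (Matrix.finite_real_spectrum (A := Xᴴ * X)).toFinset with hs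
  set p : Polynomial ℝ := Lagrange.interpolate s id g with hp
  have hpg : ∀ x ∈ s, Polynomial.eval x p = g x := fun x hx =>
    Lagrange.eval_interpolate_at_node g (Set.injOn_id _) hx
  have e1 : cfc g (X * Xᴴ) = Polynomial.aeval (X * Xᴴ) p := by
    rw [← cfc_polynomial p (X * Xᴴ) h1]
    refine cfc_congr fun x hx => ?_
    exact (hpg x (Finset.mem_union_left _
      ((Matrix.finite_real_spectrum).mem_toFinset.mpr hx))).symm
  have e2 : cfc g (Xᴴ * X) = Polynomial.aeval (Xᴴ * X) p := by
    rw [← cfc_polynomial p (Xᴴ * X) h2]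
    refine cfc_congr fun x hx => ?_
    exact (hpg x (Finset.mem_union_right _
      ((Matrix.finite_real_spectrum).mem_toFinset.mpr hx))).symm
  rw [e1, e2, aeval_mul_swap]

/-- `E f̂(E A⁻¹ E) E = A^{1/2} f(A^{-1/2} E A^{-1/2}) A^{1/2}`, where `f̂(x) = f(x)/x`
for `x > 0` and `f̂(0) = 0`. -/
theorem projection_compression_identity {n : ℕ}
    (f : ℝ → ℝ)
    (hf_mono : ∀ (k : ℕ) (X Y : Matrix (Fin k) (Fin k) ℂ), X.PosSemidef → Y.PosSemidef →
      (Y - X).PosSemidef → (cfcH f Y - cfcH f X).PosSemidef)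
    (hf0 : f 0 = 0)
    (fhat : ℝ → ℝ)
    (hfhat : ∀ x : ℝ, 0 < x → fhat x = f x / x)
    (hfhat0 : fhat 0 = 0)
    (A E : Matrix (Fin n) (Fin n) ℂ) (hA : A.PosDef)
    (hE : E.IsHermitian) (hE2 : E * E = E) :
    E * cfcH fhat (E * A⁻¹ * E) * E =
      mpow A (1/2) * cfcH f (mpow A (-(1/2)) * E * mpow A (-(1/2))) * mpow A (1/2) := by
  have hAh : A.IsHermitian := hA.1
  have hspec : ∀ x ∈ spectrum ℝ A, (0:ℝ) < x := by
    rw [hAh.spectrum_real_eq_range_eigenvalues]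
    rintro x ⟨i, rfl⟩
    exact hA.eigenvalues_pos i
  have hBdef : mpow A (-(1/2)) = cfc (fun x : ℝ => x ^ (-(1/2) : ℝ)) A := cfcH_eq_cfc _ hAh
  have hSdef : mpow A (1/2) = cfc (fun x : ℝ => x ^ (1/2 : ℝ)) A := cfcH_eq_cfc _ hAh
  set B := mpow A (-(1/2)) with hB
  set S := mpow A (1/2) with hS
  have hBh : B.IsHermitian := by
    rw [hBdef]
    exact (cfc_predicate (fun x : ℝ => x ^ (-(1/2) : ℝ)) A : IsSelfAdjoint _)
  have hSB : S * B = 1 := by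
    rw [hSdef, hBdef, ← cfc_mul _ _ A (contOnSpec _ A) (contOnSpec _ A)]
    calc cfc (fun x : ℝ => x ^ (1/2 : ℝ) * x ^ (-(1/2) : ℝ)) A
        = cfc (fun _ : ℝ => (1:ℝ)) A := by
          refine cfc_congr fun x hx => ?_
          have hx0 := hspec x hx
          show x ^ (1/2 : ℝ) * x ^ (-(1/2) : ℝ) = 1
          rw [← Real.rpow_add hx0, show (1/2 : ℝ) + -(1/2) = 0 by ring, Real.rpow_zero]
      _ = 1 := cfc_const_one ℝ A
  have hBS : B * S = 1 := by
    rw [hSdef, hBdef, ← cfc_mul _ _ A (contOnSpec _ A) (contOnSpec _ A)]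
    calc cfc (fun x : ℝ => x ^ (-(1/2) : ℝ) * x ^ (1/2 : ℝ)) A
        = cfc (fun _ : ℝ => (1:ℝ)) A := by
          refine cfc_congr fun x hx => ?_
          have hx0 := hspec x hx
          show x ^ (-(1/2) : ℝ) * x ^ (1/2 : ℝ) = 1
          rw [← Real.rpow_add hx0, show (-(1/2) : ℝ) + 1/2 = 0 by ring, Real.rpow_zero]
      _ = 1 := cfc_const_one ℝ A
  have hBB : A⁻¹ = B * B := by
    refine Matrix.inv_eq_right_inv ?_
    have hBBc : B * B = cfc (fun x : ℝ => x ^ (-(1/2) : ℝ) * x ^ (-(1/2) : ℝ)) A := by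
      rw [hBdef]
      exact (cfc_mul _ _ A (contOnSpec _ A) (contOnSpec _ A)).symm
    rw [hBBc]
    nth_rewrite 1 [← cfc_id ℝ A hAh]
    have hm := cfc_mul (id : ℝ → ℝ) (fun x : ℝ => x ^ (-(1/2) : ℝ) * x ^ (-(1/2) : ℝ)) A
      (contOnSpec _ A) (contOnSpec _ A)
    refine Eq.trans hm.symm ?_
    calc cfc (fun x : ℝ => id x * (x ^ (-(1/2) : ℝ) * x ^ (-(1/2) : ℝ))) A
        = cfc (fun _ : ℝ => (1:ℝ)) A := by
          refine cfc_congr fun x hx => ?_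
          have hx0 := hspec x hx
          show id x * (x ^ (-(1/2) : ℝ) * x ^ (-(1/2) : ℝ)) = 1
          rw [id_eq, ← Real.rpow_add hx0, show (-(1/2) : ℝ) + -(1/2) = -1 by ring,
            Real.rpow_neg_one, mul_inv_cancel₀ (ne_of_gt hx0)]
      _ = 1 := cfc_const_one ℝ A
  set X := E * B with hX
  have hXc : Xᴴ = B * E := by rw [hX, conjTranspose_mul, hBh.eq, hE.eq]
  have hXXc : X * Xᴴ = E * A⁻¹ * E := by rw [hX, hXc, hBB]; noncomm_ring
  have hXcX : Xᴴ * X = B * E * B := by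
    rw [hX, hXc, mul_assoc, ← mul_assoc E E B, hE2, ← mul_assoc]
  have hXXh : (E * A⁻¹ * E).IsHermitian :=
    hXXc ▸ (posSemidef_self_mul_conjTranspose X).1
  have hBEBh : (B * E * B).IsHermitian :=
    hXcX ▸ (posSemidef_conjTranspose_mul_self X).1
  rw [cfcH_eq_cfc fhat hXXh, cfcH_eq_cfc f hBEBh, ← hXXc, ← hXcX]
  have hXcXh : (Xᴴ * X).IsHermitian := (posSemidef_conjTranspose_mul_self X).1
  have hspec2 : ∀ x ∈ spectrum ℝ (Xᴴ * X), (0:ℝ) ≤ x := by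
    rw [hXcXh.spectrum_real_eq_range_eigenvalues]
    rintro x ⟨i, rfl⟩
    exact (posSemidef_conjTranspose_mul_self X).eigenvalues_nonneg i
  have key : Xᴴ * cfc fhat (X * Xᴴ) * X = cfc f (Xᴴ * X) := by
    rw [mul_assoc, cfc_mul_swap, ← mul_assoc]
    nth_rewrite 1 [← cfc_id ℝ (Xᴴ * X) hXcXh]
    have hm := cfc_mul (id : ℝ → ℝ) fhat (Xᴴ * X)
      (contOnSpec _ _) (contOnSpec _ _)
    refine Eq.trans hm.symm ?_
    refine cfc_congr fun x hx => ?_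
    rcases (hspec2 x hx).lt_or_eq with h | h
    · show id x * fhat x = f x
      rw [id_eq, hfhat x h, mul_div_cancel₀ _ (ne_of_gt h)]
    · show id x * fhat x = f x
      rw [id_eq, ← h, hfhat0, hf0, mul_zero]
  rw [← key]
  have hSXc : S * Xᴴ = E := by rw [hXc, ← mul_assoc, hSB, one_mul]
  have hXS : X * S = E := by rw [hX, mul_assoc, hBS, mul_one]
  calc E * cfc fhat (X * Xᴴ) * E
      = (S * Xᴴ) * cfc fhat (X * Xᴴ) * (X * S) := by rw [hSXc, hXS]
    _ = S * (Xᴴ * cfc fhat (X * Xᴴ) * X) * S := by noncomm_ring
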